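/- arXiv:2107.02205 — 2 statements merged into one kernel-verified Lean document; each statement's English description precedes it below -/
import Mathlib

section
/- With the notation of the potential-optimality definition, if j is potentially optimal witnessed by some L̃ > 0, then for every i ∈ I with δ_i = δ_j we have f_j ≤ f_i, and for every i ∈ I with δ_i > δ_j we have (f_i − f_j)/(δ_i − δ_j) ≥ L̃, while for every i with δ_i < δ_j we have (f_j − f_i)/(δ_j − δ_i) ≤ L̃. Consequently max over {i : δ_i < δ_j} of (f_j − f_i)/(δ_j − δ_i) ≤ min over {i : δ_i > δ_j} of (f_i − f_j)/(δ_i − δ_j) whenever both sets are nonempty. -/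
/-- Necessary conditions for potential optimality: if `j` satisfies condition (1)
with witness `L̃ > 0`, then `f j ≤ f i` for all `i` of equal measure, the slopes
to larger rectangles are at least `L̃`, the slopes to smaller rectangles are at
most `L̃`, and consequently every slope from a smaller rectangle is at most every
slope to a larger rectangle. -/
theorem potentially_optimal_slopes {I : Type*} [Fintype I]
    (δ f : I → ℝ) (hδ : ∀ i, 0 < δ i) (j : I) (L : ℝ) (hL : 0 < L)
    (hpo : ∀ i, f j - L * δ j ≤ f i - L * δ i) :
    (∀ i, δ i = δ j → f j ≤ f i) ∧
    (∀ i, δ j < δ i → L ≤ (f i - f j) / (δ i - δ j)) ∧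
    (∀ i, δ i < δ j → (f j - f i) / (δ j - δ i) ≤ L) ∧
    (∀ i₁ i₂, δ i₁ < δ j → δ j < δ i₂ →
      (f j - f i₁) / (δ j - δ i₁) ≤ (f i₂ - f j) / (δ i₂ - δ j)) := by
  have h1 : ∀ i, δ i = δ j → f j ≤ f i := by
    intro i h; have := hpo i; rw [h] at this; linarith
  have h2 : ∀ i, δ j < δ i → L ≤ (f i - f j) / (δ i - δ j) := by
    intro i h
    rw [le_div_iff₀ (by linarith)]
    have := hpo i; nlinarith
  have h3 : ∀ i, δ i < δ j → (f j - f i) / (δ j - δ i) ≤ L := by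
    intro i h
    rw [div_le_iff₀ (by linarith)]
    have := hpo i; nlinarith
  exact ⟨h1, h2, h3, fun i₁ i₂ h₁ h₂ => le_trans (h3 i₁ h₁) (h2 i₂ h₂)⟩
end

section
/- In the PLOR selection rule, the set of selected hyper-rectangles consists of those attaining the minimal center value among rectangles of maximal measure δ_max and those attaining the minimal center value among rectangles of minimal measure δ_min. If all rectangles have the same measure (δ_max = δ_min), this set is the set of rectangles with the overall minimal center value; in general the selected set is nonempty and has at most as many elements as the partition, and every selected rectangle j of maximal measure satisfies condition (1) of the potential-optimality definition for all sufficiently large L̃. -/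
/-- The PLOR selection rule: the selected set consists of the minimizers of the
center value among rectangles of maximal measure together with the minimizers
among rectangles of minimal measure.  If all measures coincide, this set is the
set of rectangles with overall minimal center value; in general it is nonempty
with at most as many elements as the partition, and every selected rectangle of
maximal measure satisfies potential-optimality condition (1) for all
sufficiently large `L̃`. -/
theorem plor_selection {I : Type*} [Fintype I] [Nonempty I]
    (δ f : I → ℝ) (hδ : ∀ i, 0 < δ i)
    (dmax dmin : ℝ)
    (hdmax : dmax = Finset.univ.sup' Finset.univ_nonempty δ)
    (hdmin : dmin = Finset.univ.inf' Finset.univ_nonempty δ)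
    (S : Set I)
    (hS : S = {j | δ j = dmax ∧ ∀ i, δ i = dmax → f j ≤ f i} ∪
              {j | δ j = dmin ∧ ∀ i, δ i = dmin → f j ≤ f i}) :
    ((∀ i i', δ i = δ i') → S = {j | ∀ i, f j ≤ f i}) ∧
    S.Nonempty ∧ S.ncard ≤ Fintype.card I ∧
    (∀ j ∈ S, δ j = dmax →
      ∃ L0 : ℝ, 0 < L0 ∧ ∀ L : ℝ, L0 ≤ L →
        ∀ i, f j - L * δ j ≤ f i - L * δ i) := by

  subst hdmax hdmin hS
  set dmax := Finset.univ.sup' Finset.univ_nonempty δ with hdm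
  set dmin := Finset.univ.inf' Finset.univ_nonempty δ with hdn
  obtain ⟨j0, -, hj0⟩ := Finset.exists_mem_eq_sup' Finset.univ_nonempty δ
  obtain ⟨i0, -, hi0⟩ := Finset.exists_mem_eq_inf' Finset.univ_nonempty δ
  have hle : ∀ i, δ i ≤ dmax := fun i => Finset.le_sup' δ (Finset.mem_univ i)
  refine ⟨?_, ?_, ?_, ?_⟩
  · intro hall
    have h1 : ∀ i, δ i = dmax := fun i => (hall i j0).trans hj0.symm
    have h2 : dmin = dmax := hi0.trans (h1 i0)
    ext j
    simp only [Set.mem_union, Set.mem_setOf_eq]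
    constructor
    · rintro (⟨-, h⟩ | ⟨-, h⟩) <;> intro i
      · exact h i (h1 i)
      · exact h i ((h1 i).trans h2.symm)
    · intro h
      exact Or.inl ⟨h1 j, fun i _ => h i⟩
  · obtain ⟨j, hjmem, hjmin⟩ := Finset.exists_min_image
      (Finset.univ.filter fun i => δ i = dmax) f ⟨j0, by simp [hj0.symm]; rfl⟩
    exact ⟨j, Or.inl ⟨(Finset.mem_filter.1 hjmem).2, fun i hi => hjmin i (by simp [hi])⟩⟩
  · have h := Set.ncard_le_ncard (Set.subset_univ
      ({j | δ j = dmax ∧ ∀ i, δ i = dmax → f j ≤ f i} ∪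
       {j | δ j = dmin ∧ ∀ i, δ i = dmin → f j ≤ f i})) Set.finite_univ
    simpa [Set.ncard_univ] using h
  · rintro j hj hjdmax
    have hfj : ∀ i, δ i = dmax → f j ≤ f i := by
      rcases hj with ⟨-, h⟩ | ⟨hjdmin, h⟩
      · exact h
      · intro i hi
        exact h i (hi.trans (hjdmax ▸ hjdmin : dmax = dmin))
    set g : I → ℝ := fun i => if δ i < dmax then (f j - f i) / (dmax - δ i) else 0 with hg
    refine ⟨max 1 (Finset.univ.sup' Finset.univ_nonempty g),
      lt_of_lt_of_le one_pos (le_max_left _ _), ?_⟩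
    intro L hL i
    rcases eq_or_lt_of_le (hle i) with hi | hi
    · rw [hjdmax, ← hi]
      linarith [hfj i hi]
    · have hgi : g i = (f j - f i) / (dmax - δ i) := if_pos hi
      have hLg : (f j - f i) / (dmax - δ i) ≤ L :=
        le_trans (le_trans (hgi ▸ Finset.le_sup' g (Finset.mem_univ i)) (le_max_right 1 _)) hL
      have hpos : 0 < dmax - δ i := sub_pos.2 hi
      have h2 := (div_le_iff₀ hpos).1 hLg
      rw [hjdmax]
      nlinarith
end
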